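/- Let S ⊆ ℝ^d be a compact r-convex set such that μ(B(x,ε) ∩ S) > 0 for all x ∈ S and ε > 0, and let X_1, X_2, … be i.i.d. uniform on S. Then the r-convex hull S_n = C_r({X_1,…,X_n}) satisfies d_H(S_n, S) → 0 almost surely. -/

import Mathlib

open Metric Set Filter MeasureTheory

/-- The `r`-convex hull: intersection of complements of all open balls of radius `r`
disjoint from `A`. -/
def rHull {d : ℕ} (r : ℝ) (A : Set (EuclideanSpace ℝ (Fin d))) :
    Set (EuclideanSpace ℝ (Fin d)) :=
  ⋂ y ∈ {y : EuclideanSpace ℝ (Fin d) | Metric.ball y r ∩ A = ∅}, (Metric.ball y r)ᶜ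

/-- `S` is `r`-convex if it equals its `r`-convex hull. -/
def RConvex {d : ℕ} (r : ℝ) (S : Set (EuclideanSpace ℝ (Fin d))) : Prop :=
  rHull r S = S

lemma subset_rHull {d : ℕ} (r : ℝ) (A : Set (EuclideanSpace ℝ (Fin d))) :
    A ⊆ rHull r A := by
  intro x hx
  refine mem_iInter₂.2 fun y hy => ?_
  intro hxb
  have : x ∈ Metric.ball y r ∩ A := ⟨hxb, hx⟩
  rw [mem_setOf_eq] at hy
  rw [hy] at this
  exact this

lemma rHull_mono {d : ℕ} (r : ℝ) {A B : Set (EuclideanSpace ℝ (Fin d))} (h : A ⊆ B) :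
    rHull r A ⊆ rHull r B := by
  intro x hx
  refine mem_iInter₂.2 fun y hy => ?_
  rw [mem_setOf_eq] at hy
  have hy' : Metric.ball y r ∩ A = ∅ := by
    apply eq_empty_of_subset_empty
    rw [← hy]
    exact inter_subset_inter_right _ h
  exact mem_iInter₂.1 hx y hy'

lemma det_tendsto {d : ℕ} {r : ℝ} (hr : 0 < r) {S : Set (EuclideanSpace ℝ (Fin d))}
    (hS : IsCompact S) (hSne : S.Nonempty) (hconv : RConvex r S)
    {u : Set (EuclideanSpace ℝ (Fin d))} (hu : Dense u)
    (hdense : ∀ x ∈ S, ∀ ε : ℝ, 0 < ε → 0 < volume (Metric.ball x ε ∩ S))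
    (Y : ℕ → EuclideanSpace ℝ (Fin d)) (hY : ∀ i, Y i ∈ S)
    (hhit : ∀ q ∈ u, ∀ k : ℕ, 0 < volume (Metric.ball q (1/(k+1 : ℝ)) ∩ S) →
      ∃ i, Y i ∈ Metric.ball q (1/(k+1 : ℝ))) :
    Tendsto (fun n : ℕ => hausdorffDist (rHull r (Y '' Iio (n+1))) S) atTop (nhds 0) := by
  classical
  have hsub : ∀ n : ℕ, rHull r (Y '' Iio (n+1)) ⊆ S := by
    intro n
    have himg : Y '' Iio (n+1) ⊆ S := by
      rintro _ ⟨i, _, rfl⟩; exact hY i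
    calc rHull r (Y '' Iio (n+1)) ⊆ rHull r S := rHull_mono r himg
      _ = S := hconv
  rw [Metric.tendsto_atTop]
  intro ε hε
  obtain ⟨k, hk⟩ := exists_nat_one_div_lt (show (0:ℝ) < ε/3 by linarith)
  set δ : ℝ := 1/(k+1 : ℝ) with hδ
  have hδpos : 0 < δ := by positivity
  -- for each point of S there is a sample point within 2δ
  have hexists : ∀ y ∈ S, ∃ i, dist y (Y i) < 2*δ := by
    intro y hyS
    obtain ⟨q, hqb, hqu⟩ := (Metric.dense_iff.1 hu) y (δ/2) (by positivity)
    have hqy : dist q y < δ/2 := mem_ball.1 hqb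
    have hball : Metric.ball y (δ/2) ⊆ Metric.ball q δ := by
      intro z hz
      rw [mem_ball] at hz ⊢
      have : dist z q ≤ dist z y + dist y q := dist_triangle z y q
      rw [dist_comm y q] at this
      linarith
    have hposB : 0 < volume (Metric.ball q δ ∩ S) :=
      lt_of_lt_of_le (hdense y hyS (δ/2) (by positivity))
        (measure_mono (inter_subset_inter_left S hball))
    obtain ⟨i, hi⟩ := hhit q hqu k hposB
    refine ⟨i, ?_⟩
    have h1 : dist y (Y i) ≤ dist y q + dist q (Y i) := dist_triangle y q (Y i)
    have h2 : dist q (Y i) < δ := by rw [dist_comm]; exact mem_ball.1 hi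
    rw [dist_comm q y] at hqy
    linarith
  -- finite subcover
  obtain ⟨t, htS, hcov⟩ := hS.elim_nhds_subcover (fun y => Metric.ball y (δ/2))
    (fun y _ => ball_mem_nhds y (by positivity))
  set f : EuclideanSpace ℝ (Fin d) → ℕ :=
    fun y => if h : ∃ i, dist y (Y i) < 2*δ then h.choose else 0 with hf
  refine ⟨t.sup f, fun n hn => ?_⟩
  have hbound : hausdorffDist (rHull r (Y '' Iio (n+1))) S ≤ 5*δ/2 := by
    apply hausdorffDist_le_of_infDist (by positivity)
    · intro x hx
      have : infDist x S = 0 := infDist_zero_of_mem (hsub n hx)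
      rw [this]; positivity
    · intro z hz
      obtain ⟨y, hyt, hzy⟩ := mem_iUnion₂.1 (hcov hz)
      have hyS := htS y hyt
      have hex : ∃ i, dist y (Y i) < 2*δ := hexists y hyS
      have hfy : dist y (Y (f y)) < 2*δ := by
        rw [hf]; simp only [dif_pos hex]; exact hex.choose_spec
      have hfyn : f y < n + 1 := by
        have : f y ≤ t.sup f := Finset.le_sup hyt
        omega
      have hmem : Y (f y) ∈ rHull r (Y '' Iio (n+1)) :=
        subset_rHull r _ ⟨f y, hfyn, rfl⟩
      have h1 : infDist z (rHull r (Y '' Iio (n+1))) ≤ dist z (Y (f y)) :=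
        infDist_le_dist_of_mem hmem
      have h2 : dist z (Y (f y)) ≤ dist z y + dist y (Y (f y)) := dist_triangle _ _ _
      have h3 : dist z y < δ/2 := mem_ball.1 hzy
      linarith
  have hnn : 0 ≤ hausdorffDist (rHull r (Y '' Iio (n+1))) S := hausdorffDist_nonneg
  rw [Real.dist_eq, sub_zero, abs_of_nonneg hnn]
  have : δ < ε/3 := hk
  linarith

theorem rHull_estimator_hausdorff_consistency {d : ℕ} {r : ℝ} (hr : 0 < r)
    {S : Set (EuclideanSpace ℝ (Fin d))} (hS : IsCompact S) (hconv : RConvex r S)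
    (hdense : ∀ x ∈ S, ∀ ε : ℝ, 0 < ε → 0 < volume (Metric.ball x ε ∩ S))
    (hpos : 0 < volume S)
    {Ω : Type*} [MeasurableSpace Ω] (P : Measure Ω) [IsProbabilityMeasure P]
    (X : ℕ → Ω → EuclideanSpace ℝ (Fin d)) (hmeas : ∀ i, Measurable (X i))
    (hindep : ProbabilityTheory.iIndepFun X P)
    (hdist : ∀ i, Measure.map (X i) P = (volume S)⁻¹ • volume.restrict S) :
    ∀ᵐ ω ∂P, Tendsto
      (fun n : ℕ =>
        Metric.hausdorffDist (rHull r ((fun i => X i ω) '' Set.Iio (n + 1))) S)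
      atTop (nhds 0) := by
  obtain ⟨u, hu_count, hu_dense⟩ :=
    TopologicalSpace.exists_countable_dense (EuclideanSpace ℝ (Fin d))
  have hSmeas : MeasurableSet S := hS.isClosed.measurableSet
  have hvol_ne_top : volume S ≠ ⊤ := hS.measure_lt_top.ne
  have hSne : S.Nonempty := by
    rw [Set.nonempty_iff_ne_empty]
    intro h
    rw [h] at hpos
    simp at hpos
  have hmap : ∀ (i : ℕ) (B : Set (EuclideanSpace ℝ (Fin d))), MeasurableSet B →
      P (X i ⁻¹' B) = (volume S)⁻¹ * volume (B ∩ S) := by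
    intro i B hB
    rw [← Measure.map_apply (hmeas i) hB, hdist i, Measure.smul_apply, smul_eq_mul,
      Measure.restrict_apply hB]
  have h1 : ∀ᵐ ω ∂P, ∀ i, X i ω ∈ S := by
    rw [ae_all_iff]
    intro i
    have hone : P (X i ⁻¹' S) = 1 := by
      rw [hmap i S hSmeas, inter_self, ENNReal.inv_mul_cancel hpos.ne' hvol_ne_top]
    have h0 : P ((X i ⁻¹' S)ᶜ) = 0 :=
      (prob_compl_eq_zero_iff ((hmeas i) hSmeas)).2 hone
    rw [ae_iff]
    exact h0
  have h2 : ∀ q ∈ u, ∀ k : ℕ, 0 < volume (Metric.ball q (1/(k+1 : ℝ)) ∩ S) →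
      ∀ᵐ ω ∂P, ∃ i, X i ω ∈ Metric.ball q (1/(k+1 : ℝ)) := by
    intro q hq k hposB
    set B := Metric.ball q (1/(k+1 : ℝ)) with hB
    have hBm : MeasurableSet B := measurableSet_ball
    have hppos : (volume S)⁻¹ * volume (B ∩ S) ≠ 0 := by
      apply mul_ne_zero
      · exact ENNReal.inv_ne_zero.2 hvol_ne_top
      · exact hposB.ne'
    have hindepset : ProbabilityTheory.iIndepSet (fun i => X i ⁻¹' B) P := by
      rw [ProbabilityTheory.iIndepSet_iff_meas_biInter (fun i => (hmeas i) hBm)]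
      intro s
      exact hindep.meas_biInter (fun i _ => ⟨B, hBm, rfl⟩)
    have hsum : (∑' i : ℕ, P (X i ⁻¹' B)) = ⊤ := by
      have : ∀ i : ℕ, P (X i ⁻¹' B) = (volume S)⁻¹ * volume (B ∩ S) :=
        fun i => hmap i B hBm
      simp_rw [this]
      exact ENNReal.tsum_const_eq_top_of_ne_zero hppos
    have hls := ProbabilityTheory.measure_limsup_eq_one
      (fun i => (hmeas i) hBm) hindepset hsum
    have hsubset : limsup (fun i => X i ⁻¹' B) atTop ⊆ ⋃ i, X i ⁻¹' B := by
      rw [limsup_eq_iInf_iSup_of_nat]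
      refine (iInter_subset _ 0).trans ?_
      exact iUnion₂_subset fun i _ => subset_iUnion (fun j => X j ⁻¹' B) i
    have hone : P (⋃ i, X i ⁻¹' B) = 1 :=
      le_antisymm prob_le_one (hls ▸ measure_mono hsubset)
    have h0 : P ((⋃ i, X i ⁻¹' B)ᶜ) = 0 :=
      (prob_compl_eq_zero_iff (MeasurableSet.iUnion fun i => (hmeas i) hBm)).2 hone
    rw [ae_iff]
    convert h0 using 2
    ext ω
    simp [mem_iUnion]
  have h2' : ∀ᵐ ω ∂P, ∀ q ∈ u, ∀ k : ℕ,
      0 < volume (Metric.ball q (1/(k+1 : ℝ)) ∩ S) →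
      ∃ i, X i ω ∈ Metric.ball q (1/(k+1 : ℝ)) := by
    rw [ae_ball_iff hu_count]
    intro q hq
    rw [ae_all_iff]
    intro k
    by_cases hp : 0 < volume (Metric.ball q (1/(k+1 : ℝ)) ∩ S)
    · filter_upwards [h2 q hq k hp] with ω hω _ using hω
    · exact ae_of_all _ fun ω h => absurd h hp
  filter_upwards [h1, h2'] with ω hω1 hω2
  exact det_tendsto hr hS hSne hconv hu_dense hdense (fun i => X i ω) hω1
    (fun q hq k hp => hω2 q hq k hp)
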